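/- Fix an integer K ≥ 1 and a real number p ∈ (1/2,1], let A = A(p,K) be the (2K+2)×(2K+2) real matrix described in the context, and let a ∈ ℝ^{2K+2} be the vector with a_{2m+1} = 1 for m = 0,…,K and a_{2m+2} = 0 for m = 0,…,K. Then the vector v_1 ∈ ℝ^{2K+2} defined by v_{1,2m+1} = 2^{-(m+1)} for m = 0,…,K−1, v_{1,2K+1} = 2^{-K}, v_{1,2m+2} = (1−p)/((2p−1) 2^{m+1}) for m = 0,…,K−1, and v_{1,2K+2} = (1−p)/((2p−1) 2^K), satisfies A v_1 = (2p−1) v_1 and a·v_1 = 1; moreover it is the unique vector with these two properties. -/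

import Mathlib

open MeasureTheory ProbabilityTheory Filter Matrix Asymptotics
open scoped ENNReal NNReal Topology

noncomputable section

namespace PolyaUrnPaper

/-- The state space of a `q`-colour urn: vectors in `ℝ^q` with the Euclidean norm. -/
abbrev E (q : ℕ) := EuclideanSpace ℝ (Fin q)

/-- The complexified state space `ℂ^q` with the Euclidean norm. -/
abbrev EC (q : ℕ) := EuclideanSpace ℂ (Fin q)

variable {q : ℕ}

/-- Total activity `a · x` of a composition vector `x`. -/
def totAct (a : Fin q → ℝ) (x : E q) : ℝ := ∑ i, a i * x i

/-- Coordinatewise complexification of a real vector. -/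
def toC (x : E q) : EC q := WithLp.toLp 2 fun i => (x i : ℂ)

variable {Ω : Type*} [MeasurableSpace Ω]

/-- The σ-field `ℱ_n` generated by `X_1, …, X_n`. -/
def urnFiltration (X : ℕ → Ω → E q) (n : ℕ) : MeasurableSpace Ω :=
  ⨆ k ∈ Finset.Icc 1 n, MeasurableSpace.comap (X k) inferInstance

/-- The total activity process `S_n = a · X_n`. -/
def Sproc (a : Fin q → ℝ) (X : ℕ → Ω → E q) (n : ℕ) (ω : Ω) : ℝ := totAct a (X n ω)

/-- The increment `ΔX_n = X_{n+1} - X_n`. -/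
def ΔX (X : ℕ → Ω → E q) (n : ℕ) (ω : Ω) : E q := X (n + 1) ω - X n ω

/-- The event `E_n^c` of non-extinction up to time `n`. -/
def NE (a : Fin q → ℝ) (X : ℕ → Ω → E q) (n : ℕ) : Set Ω :=
  {ω | ∀ k ≤ n, 0 < Sproc a X k ω}

/-- The event of non-extinction (at all times). -/
def NEinf (a : Fin q → ℝ) (X : ℕ → Ω → E q) : Set Ω :=
  {ω | ∀ k, 0 < Sproc a X k ω}

/-- A generalized Pólya urn process: `P` is a probability measure, `a` the (nonnegative)
activity vector, `ξ i` the law of the replacement vector for colour `i`, `X₀` the non-random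
initial composition with `a · X₀ > 0`, and `X` the urn process.  The `dynamics` field states
that conditionally on `ℱ_n`, on the event `S_n > 0` the increment `ΔX_n` is distributed
as the mixture `∑ i (a_i X_{n,i}/S_n) ξ_i` (drawing colour `i` with probability
`a_i X_{n,i}/S_n` and then using law `ξ_i`, independently of the past), and `ΔX_n = 0`
on the event `S_n = 0`. -/
structure IsPolyaUrn (P : Measure Ω) (a : Fin q → ℝ) (ξ : Fin q → Measure (E q))
    (X₀ : E q) (X : ℕ → Ω → E q) : Prop where
  probP : IsProbabilityMeasure P
  probξ : ∀ i, IsProbabilityMeasure (ξ i)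
  ha : ∀ i, 0 ≤ a i
  hX₀nonneg : ∀ i, 0 ≤ X₀ i
  haX₀ : 0 < totAct a X₀
  hX0 : ∀ ω, X 0 ω = X₀
  measX : ∀ n, Measurable (X n)
  dynamics : ∀ n, ∀ B : Set (E q), MeasurableSet B →
    ∀ᵐ ω ∂P,
      (P[fun ω' => B.indicator (fun _ => (1 : ℝ)) (ΔX X n ω') | urnFiltration X n]) ω =
        if 0 < Sproc a X n ω then
          ∑ i, (a i * X n ω i / Sproc a X n ω) * (ξ i B).toReal
        else B.indicator (fun _ => (1 : ℝ)) 0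

/-- Tenability: almost surely all coordinates of `X_n` are nonnegative for all `n`. -/
def Tenable (P : Measure Ω) (X : ℕ → Ω → E q) : Prop :=
  ∀ n, ∀ᵐ ω ∂P, ∀ i, 0 ≤ X n ω i

/-- The urn is balanced in expectation with constant `b`:
`a · E ξ_i = b` for every colour `i` with positive activity. -/
def BalancedInExp (a : Fin q → ℝ) (ξ : Fin q → Measure (E q)) (b : ℝ) : Prop :=
  ∀ i, 0 < a i → ∫ x, totAct a x ∂(ξ i) = b

/-- The intensity matrix `A = (a_j E ξ_{j,i})_{i,j}`. -/
def intensity (a : Fin q → ℝ) (ξ : Fin q → Measure (E q)) : Matrix (Fin q) (Fin q) ℝ :=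
  Matrix.of fun i j => a j * ∫ x, x i ∂(ξ j)

/-- The intensity matrix viewed as a complex matrix. -/
def intensityC (a : Fin q → ℝ) (ξ : Fin q → Measure (E q)) : Matrix (Fin q) (Fin q) ℂ :=
  (intensity a ξ).map Complex.ofReal

/-- The largest eigenvalue `λ₁` of `A` equals `b`: `b` is an eigenvalue and it dominates
the real parts of all eigenvalues. -/
def LambdaOneIs (A : Matrix (Fin q) (Fin q) ℂ) (b : ℝ) : Prop :=
  (b : ℂ) ∈ spectrum ℂ A ∧ ∀ μ ∈ spectrum ℂ A, μ.re ≤ b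

/-- Condition `U(p)`: the urn is tenable and balanced in expectation with `λ₁ = b > 0`,
and `E|ξ_i|^p < ∞` for all colours `i`. -/
def CondU (P : Measure Ω) (a : Fin q → ℝ) (ξ : Fin q → Measure (E q))
    (X₀ : E q) (X : ℕ → Ω → E q) (b : ℝ) (p : ℝ) : Prop :=
  IsPolyaUrn P a ξ X₀ X ∧ Tenable P X ∧ BalancedInExp a ξ b ∧ 0 < b ∧
    LambdaOneIs (intensityC a ξ) b ∧
    ∀ i, ∫⁻ x, (‖x‖₊ : ℝ≥0∞) ^ p ∂(ξ i) < ∞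

/-- `Re λ₂`: the largest real part among the eigenvalues of `A` (counted with algebraic
multiplicity) after removing one copy of `λ₁ = b`. -/
def secondRe (A : Matrix (Fin q) (Fin q) ℂ) (b : ℝ) : ℝ :=
  letI : DecidableEq ℂ := Classical.decEq ℂ
  sSup (Complex.re '' {μ : ℂ | μ ∈ A.charpoly.roots.erase (b : ℂ)})

/-- `ν_λ`: one less than the size of the largest Jordan block of `A` for `λ`, i.e. the least
`m` such that `ker (A - λ)^{m+1} = ker (A - λ)^{m+2}`. -/
def nuOf (A : Matrix (Fin q) (Fin q) ℂ) (μ : ℂ) : ℕ :=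
  sInf {m : ℕ | LinearMap.ker (Matrix.mulVecLin ((A - μ • 1) ^ (m + 1))) =
      LinearMap.ker (Matrix.mulVecLin ((A - μ • 1) ^ (m + 2)))}

/-- `ν₂ = ν_{λ₂}`: the largest `ν_μ` among remaining eigenvalues `μ` with `Re μ = Re λ₂`. -/
def secondNu (A : Matrix (Fin q) (Fin q) ℂ) (b : ℝ) : ℕ :=
  letI : DecidableEq ℂ := Classical.decEq ℂ
  sSup (nuOf A '' {μ : ℂ | μ ∈ A.charpoly.roots.erase (b : ℂ) ∧ μ.re = secondRe A b})

/-- The generalized eigenspace of a matrix `A` for `μ`, i.e. `ker (A - μ I)^q`. -/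
def genEig (A : Matrix (Fin q) (Fin q) ℂ) (μ : ℂ) : Submodule ℂ (Fin q → ℂ) :=
  LinearMap.ker (Matrix.mulVecLin ((A - μ • 1) ^ q))

/-- `Pm` is the spectral projection of `A` for the eigenvalue `μ`: the projection onto the
generalized eigenspace of `μ` along the sum of the generalized eigenspaces of the other
eigenvalues. -/
def IsSpectralProjection (A : Matrix (Fin q) (Fin q) ℂ) (μ : ℂ)
    (Pm : Matrix (Fin q) (Fin q) ℂ) : Prop :=
  Pm * Pm = Pm ∧
    LinearMap.range Pm.mulVecLin = genEig A μ ∧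
    LinearMap.ker Pm.mulVecLin = ⨆ ν ∈ spectrum ℂ A \ {μ}, genEig A ν

/-- `ω_n = a·X₀ + n b`, the conditional expectation of the total activity. -/
def omegaSeq (a : Fin q → ℝ) (X₀ : E q) (b : ℝ) (n : ℕ) : ℝ := totAct a X₀ + n * b

/-- The matrix product `F_{ℓ,n} = ∏_{ℓ ≤ k < n} (I + ω_k⁻¹ A)` (complex version). -/
def FprodC (A : Matrix (Fin q) (Fin q) ℂ) (w : ℕ → ℝ) (l n : ℕ) : Matrix (Fin q) (Fin q) ℂ :=
  (((List.range' l (n - l)).map fun k =>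
      (1 : Matrix (Fin q) (Fin q) ℂ) + ((w k : ℂ))⁻¹ • A)).prod

/-- The matrix product `F_{ℓ,n} = ∏_{ℓ ≤ k < n} (I + ω_k⁻¹ A)` (real version). -/
def FprodR (A : Matrix (Fin q) (Fin q) ℝ) (w : ℕ → ℝ) (l n : ℕ) : Matrix (Fin q) (Fin q) ℝ :=
  (((List.range' l (n - l)).map fun k =>
      (1 : Matrix (Fin q) (Fin q) ℝ) + (w k)⁻¹ • A)).prod

/-- The operator norm (w.r.t. Euclidean norms) of a complex matrix. -/
def opNorm (M : Matrix (Fin q) (Fin q) ℂ) : ℝ :=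
  ‖LinearMap.toContinuousLinearMap (Matrix.toEuclideanLin M)‖

/-- The conditional expectation `E[X_n | E_n^c]` of the urn composition given
non-extinction up to time `n`. -/
def condMean (P : Measure Ω) (a : Fin q → ℝ) (X : ℕ → Ω → E q) (n : ℕ) : E q :=
  ∫ ω, X n ω ∂(P[|NE a X n])

/-- The martingale difference part `Y_n = ΔX_{n-1} - E[ΔX_{n-1} | ℱ_{n-1}]`. -/
def Yseq (P : Measure Ω) (X : ℕ → Ω → E q) (n : ℕ) (ω : Ω) : E q :=
  ΔX X (n - 1) ω - (P[ΔX X (n - 1) | urnFiltration X (n - 1)]) ω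

/-- The noise part `Z_n = ((ω_{n-1} - S_{n-1})/ω_{n-1}) E[ΔX_{n-1} | ℱ_{n-1}]`. -/
def Zseq (P : Measure Ω) (a : Fin q → ℝ) (X₀ : E q) (b : ℝ) (X : ℕ → Ω → E q)
    (n : ℕ) (ω : Ω) : E q :=
  ((omegaSeq a X₀ b (n - 1) - Sproc a X (n - 1) ω) / omegaSeq a X₀ b (n - 1)) •
    (P[ΔX X (n - 1) | urnFiltration X (n - 1)]) ω

/-- `(Y_n)_{n ≥ 1}` is a martingale difference sequence for the filtration `ℱ`. -/
def IsMDSeq {V : Type*} [NormedAddCommGroup V] [NormedSpace ℝ V] [CompleteSpace V]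
    (P : Measure Ω) (ℱ : ℕ → MeasurableSpace Ω) (Y : ℕ → Ω → V) : Prop :=
  ∀ n, 1 ≤ n → Integrable (Y n) P ∧ StronglyMeasurable[ℱ n] (Y n) ∧
    P[Y n | ℱ (n - 1)] =ᵐ[P] 0

/-- `G` is a centered Gaussian measure on `ℝ^q` with covariance matrix `Sig`,
characterized through its characteristic function. -/
def IsCenteredGaussianWithCov (Sig : Matrix (Fin q) (Fin q) ℝ) (G : Measure (E q)) : Prop :=
  IsProbabilityMeasure G ∧
    ∀ t : E q, ∫ x, Complex.exp (Complex.I * ((∑ i, t i * x i : ℝ) : ℂ)) ∂G =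
      Complex.exp (-(1 / 2 : ℂ) * ((∑ i, ∑ j, t i * Sig i j * t j : ℝ) : ℂ))

/-- Convergence in distribution of a sequence of (probability) measures on `ℝ^q`:
integrals of every bounded continuous function converge. -/
def TendstoInDistribution (μs : ℕ → Measure (E q)) (G : Measure (E q)) : Prop :=
  ∀ f : BoundedContinuousFunction (E q) ℝ,
    Tendsto (fun n => ∫ x, f x ∂(μs n)) atTop (𝓝 (∫ x, f x ∂G))


/-- Multiplication of a real matrix with a vector in `ℝ^q` (Euclidean). -/
def mulVecE {q : ℕ} (M : Matrix (Fin q) (Fin q) ℝ) (v : E q) : E q :=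
  WithLp.toLp 2 fun i => ∑ j, M i j * v j

/-- Multiplication of a complex matrix with a vector in `ℂ^q` (Euclidean). -/
def mulVecEC {q : ℕ} (M : Matrix (Fin q) (Fin q) ℂ) (v : EC q) : EC q :=
  WithLp.toLp 2 fun i => ∑ j, M i j * v j

/-- The algebraic multiplicity of `μ` as an eigenvalue of `A` (as a root of the
characteristic polynomial). -/
def algMult {q : ℕ} (A : Matrix (Fin q) (Fin q) ℂ) (μ : ℂ) : ℕ :=
  letI : DecidableEq ℂ := Classical.decEq ℂ
  A.charpoly.roots.count μ

end PolyaUrnPaper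



open PolyaUrnPaper MeasureTheory ProbabilityTheory Filter Matrix Polynomial

namespace PolyaUrnPaper

/-- The intensity matrix of the urn of outdegrees (up to `K`) of uniform attachment trees
with freezing, with activation probability `p` (0-indexed version of the matrix `A` of
Section 6.1). -/
def freezeMatrix (p : ℝ) (K : ℕ) : Matrix (Fin (2 * K + 2)) (Fin (2 * K + 2)) ℝ :=
  Matrix.of fun i j =>
    if j.val = 0 then
      (if i.val = 0 then p - 1 else if i.val = 1 then 1 - p else if i.val = 2 then p else 0)
    else if j.val % 2 = 0 ∧ j.val < 2 * K then
      (if i.val = 0 then p else 0) + (if i.val = j.val then -1 else 0) +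
        (if i.val = j.val + 1 then 1 - p else 0) + (if i.val = j.val + 2 then p else 0)
    else if j.val = 2 * K then
      (if i.val = 0 then p else 0) + (if i.val = 2 * K then -(1 - p) else 0) +
        (if i.val = 2 * K + 1 then 1 - p else 0)
    else 0

/-- The activity vector of the freezing urn: odd (paper) colours, i.e. even 0-based
indices, are active with activity `1`; frozen colours have activity `0`. -/
def freezeAct (K : ℕ) : Fin (2 * K + 2) → ℝ := fun j => if j.val % 2 = 0 then 1 else 0

/-- The right eigenvector `v₁` of `freezeMatrix p K` for the eigenvalue `2p - 1`,
normalized by `a · v₁ = 1`. -/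
def freezeV (p : ℝ) (K : ℕ) : E (2 * K + 2) := WithLp.toLp 2 fun j =>
  if j.val % 2 = 0 then
    (if j.val = 2 * K then (1 : ℝ) / 2 ^ K else 1 / 2 ^ (j.val / 2 + 1))
  else
    (if j.val = 2 * K + 1 then (1 - p) / ((2 * p - 1) * 2 ^ K)
     else (1 - p) / ((2 * p - 1) * 2 ^ (j.val / 2 + 1)))

end PolyaUrnPaper

namespace PolyaUrnPaper

section FreezeAux

private lemma geom_half₁ (K : ℕ) :
    ∑ m ∈ Finset.range K, (1 : ℝ) / 2 ^ (m + 1) = 1 - 1 / 2 ^ K := by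
  induction K with
  | zero => simp
  | succ K ih =>
      have h : (2 : ℝ) ^ K ≠ 0 := by positivity
      rw [Finset.sum_range_succ, ih, pow_succ]
      field_simp
      ring

private lemma geom_half₂ (K : ℕ) :
    ∑ m ∈ Finset.range K, ((1 : ℝ) / 2) ^ m = 2 - 2 * (1 / 2) ^ K := by
  induction K with
  | zero => norm_num
  | succ K ih => rw [Finset.sum_range_succ, ih, pow_succ]; ring

private lemma sum_range_pair (f : ℕ → ℝ) (K : ℕ) :
    ∑ j ∈ Finset.range (2 * K + 2), f j
      = ∑ m ∈ Finset.range (K + 1), (f (2 * m) + f (2 * m + 1)) := by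
  induction K with
  | zero => simp [Finset.sum_range_succ]
  | succ K ih =>
      have h : 2 * (K + 1) + 2 = (2 * K + 2) + 1 + 1 := by ring
      rw [h, Finset.sum_range_succ, Finset.sum_range_succ, ih]
      conv_rhs => rw [Finset.sum_range_succ]
      have h1 : 2 * (K + 1) = 2 * K + 2 := by ring
      rw [h1]
      ring

private lemma sum_ite_val {n : ℕ} (f : Fin n → ℝ) (c : ℕ) (hc : c < n) :
    ∑ j : Fin n, (if j.val = c then f j else 0) = f ⟨c, hc⟩ := by
  rw [Finset.sum_eq_single (⟨c, hc⟩ : Fin n)]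
  · simp
  · intro b _ hb
    rw [if_neg fun h => hb (Fin.ext h)]
  · intro h; exact absurd (Finset.mem_univ _) h

private lemma sum_even_eq (K : ℕ) (u : ℕ → ℝ) :
    ∑ j : Fin (2 * K + 2), (if j.val % 2 = 0 then u j.val else 0)
      = ∑ m ∈ Finset.range (K + 1), u (2 * m) := by
  have step : ∑ j : Fin (2 * K + 2), (if j.val % 2 = 0 then u j.val else 0)
      = ∑ t ∈ Finset.range (2 * K + 2), (if t % 2 = 0 then u t else 0) :=
    Fin.sum_univ_eq_sum_range (fun t => if t % 2 = 0 then u t else 0) (2 * K + 2)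
  rw [step, sum_range_pair]
  refine Finset.sum_congr rfl fun m hm => ?_
  rw [Finset.mem_range] at hm
  rw [if_pos (by omega : 2 * m % 2 = 0), if_neg (by omega : ¬(2 * m + 1) % 2 = 0)]
  ring

/-- numeric version of `freezeV`. -/
private def fV (p : ℝ) (K : ℕ) (c : ℕ) : ℝ :=
  if c % 2 = 0 then
    (if c = 2 * K then (1 : ℝ) / 2 ^ K else 1 / 2 ^ (c / 2 + 1))
  else
    (if c = 2 * K + 1 then (1 - p) / ((2 * p - 1) * 2 ^ K)
     else (1 - p) / ((2 * p - 1) * 2 ^ (c / 2 + 1)))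

private lemma freezeV_mk (p : ℝ) (K : ℕ) {c : ℕ} (h : c < 2 * K + 2) :
    freezeV p K ⟨c, h⟩ = fV p K c := rfl

private lemma freezeV_apply (p : ℝ) (K : ℕ) (j : Fin (2 * K + 2)) :
    freezeV p K j = fV p K j.val := rfl

private lemma fV_even (p : ℝ) (K : ℕ) {c : ℕ} (hc : c % 2 = 0) :
    fV p K c = if c = 2 * K then (1 : ℝ) / 2 ^ K else 1 / 2 ^ (c / 2 + 1) := by
  simp only [fV]; rw [if_pos hc]

private lemma fV_odd (p : ℝ) (K : ℕ) {c : ℕ} (hc : c % 2 = 1) :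
    fV p K c = if c = 2 * K + 1 then (1 - p) / ((2 * p - 1) * 2 ^ K)
      else (1 - p) / ((2 * p - 1) * 2 ^ (c / 2 + 1)) := by
  simp only [fV]; rw [if_neg (by omega)]

private lemma row_odd (p : ℝ) (K : ℕ) (v : Fin (2 * K + 2) → ℝ) {c : ℕ}
    (h : c < 2 * K + 2) (hc : c % 2 = 1) :
    (freezeMatrix p K).mulVec v ⟨c, h⟩ = (1 - p) * v ⟨c - 1, by omega⟩ := by
  have hpt : ∀ j : Fin (2 * K + 2), freezeMatrix p K ⟨c, h⟩ j * v j
      = (if j.val = c - 1 then (1 - p) * v j else 0) := by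
    intro j
    have hj := j.isLt
    have hIv : (⟨c, h⟩ : Fin (2 * K + 2)).val = c := rfl
    simp only [freezeMatrix, Matrix.of_apply]
    split_ifs <;> first | ring1 | (exfalso; first | exact ‹False› | omega)
  simp only [Matrix.mulVec, dotProduct]
  simp_rw [hpt]
  exact sum_ite_val _ _ (by omega)

private lemma row_even_mid (p : ℝ) (K : ℕ) (v : Fin (2 * K + 2) → ℝ) {c : ℕ}
    (h : c < 2 * K + 2) (hc : c % 2 = 0) (h2 : 2 ≤ c) (hlt : c < 2 * K) :
    (freezeMatrix p K).mulVec v ⟨c, h⟩ = p * v ⟨c - 2, by omega⟩ - v ⟨c, h⟩ := by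
  have hpt : ∀ j : Fin (2 * K + 2), freezeMatrix p K ⟨c, h⟩ j * v j
      = (if j.val = c - 2 then p * v j else 0) + (if j.val = c then -v j else 0) := by
    intro j
    have hj := j.isLt
    have hIv : (⟨c, h⟩ : Fin (2 * K + 2)).val = c := rfl
    simp only [freezeMatrix, Matrix.of_apply]
    split_ifs <;> first | ring1 | (exfalso; first | exact ‹False› | omega)
  simp only [Matrix.mulVec, dotProduct]
  simp_rw [hpt]
  rw [Finset.sum_add_distrib, sum_ite_val _ _ (by omega : c - 2 < 2 * K + 2),
    sum_ite_val _ _ h]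
  ring

private lemma row_last (p : ℝ) (K : ℕ) (hK : 1 ≤ K) (v : Fin (2 * K + 2) → ℝ)
    (h : 2 * K < 2 * K + 2) :
    (freezeMatrix p K).mulVec v ⟨2 * K, h⟩
      = p * v ⟨2 * K - 2, by omega⟩ - (1 - p) * v ⟨2 * K, h⟩ := by
  have hpt : ∀ j : Fin (2 * K + 2), freezeMatrix p K ⟨2 * K, h⟩ j * v j
      = (if j.val = 2 * K - 2 then p * v j else 0)
        + (if j.val = 2 * K then -((1 - p) * v j) else 0) := by
    intro j
    have hj := j.isLt
    have hIv : (⟨2 * K, h⟩ : Fin (2 * K + 2)).val = 2 * K := rfl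
    simp only [freezeMatrix, Matrix.of_apply]
    split_ifs <;> first | ring1 | (exfalso; first | exact ‹False› | omega)
  simp only [Matrix.mulVec, dotProduct]
  simp_rw [hpt]
  rw [Finset.sum_add_distrib, sum_ite_val _ _ (by omega : 2 * K - 2 < 2 * K + 2),
    sum_ite_val _ _ h]
  ring

private lemma row_zero (p : ℝ) (K : ℕ) (hK : 1 ≤ K) (v : Fin (2 * K + 2) → ℝ)
    (h : 0 < 2 * K + 2) :
    (freezeMatrix p K).mulVec v ⟨0, h⟩
      = p * (∑ j : Fin (2 * K + 2), if j.val % 2 = 0 then v j else 0) - v ⟨0, h⟩ := by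
  have hpt : ∀ j : Fin (2 * K + 2), freezeMatrix p K ⟨0, h⟩ j * v j
      = p * (if j.val % 2 = 0 then v j else 0) + (if j.val = 0 then -v j else 0) := by
    intro j
    have hj := j.isLt
    have hIv : (⟨0, h⟩ : Fin (2 * K + 2)).val = 0 := rfl
    simp only [freezeMatrix, Matrix.of_apply]
    split_ifs <;> first | ring1 | (exfalso; first | exact ‹False› | omega)
  simp only [Matrix.mulVec, dotProduct]
  simp_rw [hpt]
  rw [Finset.sum_add_distrib, ← Finset.mul_sum, sum_ite_val _ _ h]
  ring

private lemma sum_even_freezeV (p : ℝ) (K : ℕ) (hK : 1 ≤ K) :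
    ∑ j : Fin (2 * K + 2), (if j.val % 2 = 0 then freezeV p K j else 0) = 1 := by
  simp_rw [freezeV_apply]
  rw [sum_even_eq K (fV p K)]
  have hval : ∀ m ∈ Finset.range K, fV p K (2 * m) = 1 / 2 ^ (m + 1) := by
    intro m hm
    rw [Finset.mem_range] at hm
    rw [fV_even p K (by omega), if_neg (by omega),
      (by omega : 2 * m / 2 + 1 = m + 1)]
  rw [Finset.sum_range_succ, Finset.sum_congr rfl hval, geom_half₁,
    fV_even p K (by omega), if_pos rfl]
  ring

end FreezeAux

end PolyaUrnPaper

/-- **From the proof of Proposition 6.1:** the vector `v₁` described explicitly is the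
unique vector with `A v₁ = (2p-1) v₁` and `a · v₁ = 1`. -/
theorem freezeV_eigenvector (K : ℕ) (hK : 1 ≤ K) (p : ℝ)
    (hp : p ∈ Set.Ioc (1 / 2 : ℝ) 1) :
    ((freezeMatrix p K).mulVec (freezeV p K) = (2 * p - 1) • freezeV p K ∧
      freezeAct K ⬝ᵥ freezeV p K = 1) ∧
    ∀ w : Fin (2 * K + 2) → ℝ,
      (freezeMatrix p K).mulVec w = (2 * p - 1) • w → freezeAct K ⬝ᵥ w = 1 →
      w = freezeV p K := by
  obtain ⟨hp1, hp2⟩ := hp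
  have h2p : (0 : ℝ) < 2 * p - 1 := by linarith
  have h2p' : (2 * p - 1) ≠ 0 := ne_of_gt h2p
  have hp0 : p ≠ 0 := by positivity
  have hactv : freezeAct K ⬝ᵥ freezeV p K = 1 := by
    have hterm : ∀ j : Fin (2 * K + 2),
        freezeAct K j * freezeV p K j = if j.val % 2 = 0 then freezeV p K j else 0 := by
      intro j
      simp only [freezeAct]
      split_ifs <;> ring
    simp only [dotProduct]
    simp_rw [hterm]
    exact sum_even_freezeV p K hK
  refine ⟨⟨?_, hactv⟩, ?_⟩
  · funext i
    obtain ⟨c, hlt⟩ := i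
    show (freezeMatrix p K).mulVec (freezeV p K) ⟨c, hlt⟩ = (2 * p - 1) * fV p K c
    rcases Nat.even_or_odd c with ⟨m, hm⟩ | ⟨m, hm⟩
    · by_cases h0 : c = 0
      · subst h0
        rw [row_zero p K hK _ hlt, sum_even_freezeV p K hK, freezeV_mk,
          fV_even p K (by omega), if_neg (by omega)]
        have h01 : (0 : ℕ) / 2 + 1 = 1 := by norm_num
        rw [h01, pow_one]
        ring
      · by_cases hcK : c = 2 * K
        · subst hcK
          rw [row_last p K hK _ hlt, freezeV_mk, freezeV_mk,
            fV_even p K (by omega : (2 * K - 2) % 2 = 0), if_neg (by omega),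
            fV_even p K (by omega : 2 * K % 2 = 0), if_pos rfl,
            (by omega : (2 * K - 2) / 2 + 1 = K)]
          ring
        · rw [row_even_mid p K _ hlt (by omega) (by omega) (by omega), freezeV_mk,
            freezeV_mk, fV_even p K (by omega : (c - 2) % 2 = 0), if_neg (by omega),
            fV_even p K (by omega : c % 2 = 0), if_neg hcK,
            (by omega : (c - 2) / 2 + 1 = c / 2), pow_succ]
          have hpw : (2 : ℝ) ^ (c / 2) ≠ 0 := by positivity
          field_simp
          try ring
    · rw [row_odd p K _ hlt (by omega), freezeV_mk,
        fV_even p K (by omega : (c - 1) % 2 = 0), fV_odd p K (by omega : c % 2 = 1)]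
      by_cases hcK : c = 2 * K + 1
      · rw [if_pos (by omega : c - 1 = 2 * K), if_pos hcK]
        have hpw : (2 : ℝ) ^ K ≠ 0 := by positivity
        rw [mul_div_assoc' (2 * p - 1) (1 - p), mul_div_mul_left _ _ h2p']
        field_simp
        try ring
        try exact Or.inl trivial
        try ring
      · rw [if_neg (by omega), if_neg hcK, (by omega : (c - 1) / 2 = c / 2)]
        have hpw : (2 : ℝ) ^ (c / 2 + 1) ≠ 0 := by positivity
        rw [mul_div_assoc' (2 * p - 1) (1 - p), mul_div_mul_left _ _ h2p']
        field_simp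
        try ring
        try exact Or.inl trivial
        try ring
  · intro w hw hact
    have hrow : ∀ i : Fin (2 * K + 2),
        (freezeMatrix p K).mulVec w i = (2 * p - 1) * w i := by
      intro i; rw [hw]; rfl
    set W : ℕ → ℝ := fun t => if h : t < 2 * K + 2 then w ⟨t, h⟩ else 0 with hWdef
    have hWv : ∀ {c : ℕ} (h : c < 2 * K + 2), W c = w ⟨c, h⟩ := fun {c} h => dif_pos h
    have hchain : ∀ m, m < K → W (2 * m) = W 0 * (1 / 2) ^ m := by
      intro m
      induction m with
      | zero => intro _; simp
      | succ m ih =>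
          intro hm
          have h1 := hrow ⟨2 * (m + 1), by omega⟩
          rw [row_even_mid p K w (by omega) (by omega) (by omega) (by omega)] at h1
          have e1 : w (⟨2 * (m + 1) - 2, by omega⟩ : Fin (2 * K + 2)) = W (2 * m) :=
            (hWv (by omega)).symm.trans
              (congrArg W (by omega : 2 * (m + 1) - 2 = 2 * m))
          have e2 : w (⟨2 * (m + 1), by omega⟩ : Fin (2 * K + 2)) = W (2 * (m + 1)) :=
            (hWv (by omega)).symm
          rw [e1, e2, ih (by omega)] at h1
          have h2 : p * (W 0 * (1 / 2) ^ m) = p * (2 * W (2 * (m + 1))) := by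
            linear_combination h1
          have h3 := mul_left_cancel₀ hp0 h2
          rw [pow_succ]
          linear_combination ((-1 : ℝ) / 2) * h3
    have hlast : W (2 * K) = W 0 * (1 / 2) ^ (K - 1) := by
      have h1 := hrow ⟨2 * K, by omega⟩
      rw [row_last p K hK w (by omega)] at h1
      have e1 : w (⟨2 * K - 2, by omega⟩ : Fin (2 * K + 2)) = W (2 * (K - 1)) :=
        (hWv (by omega)).symm.trans (congrArg W (by omega : 2 * K - 2 = 2 * (K - 1)))
      have e2 : w (⟨2 * K, by omega⟩ : Fin (2 * K + 2)) = W (2 * K) :=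
        (hWv (by omega)).symm
      rw [e1, e2, hchain (K - 1) (by omega)] at h1
      have h2 : p * (W 0 * (1 / 2) ^ (K - 1)) = p * W (2 * K) := by
        linear_combination h1
      exact (mul_left_cancel₀ hp0 h2).symm
    have hS : freezeAct K ⬝ᵥ w = 2 * W 0 := by
      have hterm : ∀ j : Fin (2 * K + 2),
          freezeAct K j * w j = if j.val % 2 = 0 then W j.val else 0 := by
        intro j
        simp only [freezeAct]
        split_ifs
        · exact (one_mul _).trans (hWv j.isLt).symm
        · ring
      simp only [dotProduct]
      simp_rw [hterm]
      rw [sum_even_eq K W, Finset.sum_range_succ,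
        Finset.sum_congr rfl (fun m hm => hchain m (Finset.mem_range.mp hm)),
        ← Finset.mul_sum, geom_half₂, hlast]
      have hpow : ((1 : ℝ) / 2) ^ K = (1 / 2) ^ (K - 1) * (1 / 2) := by
        rw [← pow_succ, (by omega : K - 1 + 1 = K)]
      rw [hpow]
      ring
    have hW0 : W 0 = 1 / 2 := by rw [hS] at hact; linarith
    have hEvenAll : ∀ (c : ℕ) (h : c < 2 * K + 2), c % 2 = 0 → w ⟨c, h⟩ = fV p K c := by
      intro c h hc
      by_cases hcK : c = 2 * K
      · subst hcK
        rw [← hWv h, hlast, hW0, fV_even p K (by omega), if_pos rfl,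
          ← _root_.one_div_pow]
        conv_rhs => rw [(by omega : K = K - 1 + 1)]
        rw [pow_succ]
        ring
      · rw [← hWv h, (by omega : c = 2 * (c / 2)), hchain (c / 2) (by omega), hW0,
          fV_even p K (by omega : 2 * (c / 2) % 2 = 0), if_neg (by omega),
          (by omega : 2 * (c / 2) / 2 + 1 = c / 2 + 1), ← _root_.one_div_pow, pow_succ]
        ring
    have hOddAll : ∀ (c : ℕ) (h : c < 2 * K + 2), c % 2 = 1 → w ⟨c, h⟩ = fV p K c := by
      intro c h hc
      have h1 := hrow ⟨c, h⟩
      rw [row_odd p K w h hc, hEvenAll (c - 1) (by omega) (by omega),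
        fV_even p K (by omega)] at h1
      rw [fV_odd p K hc]
      by_cases hcK : c = 2 * K + 1
      · rw [if_pos (by omega : c - 1 = 2 * K)] at h1
        rw [if_pos hcK]
        have h2 : w ⟨c, h⟩ = (1 - p) * (1 / 2 ^ K) / (2 * p - 1) := by
          rw [eq_div_iff h2p']
          linear_combination -h1
        rw [h2]
        have hpw : (2 : ℝ) ^ K ≠ 0 := by positivity
        field_simp
        try ring
        try exact Or.inl trivial
      · rw [if_neg (by omega : ¬c - 1 = 2 * K),
          (by omega : (c - 1) / 2 = c / 2)] at h1
        rw [if_neg hcK]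
        have h2 : w ⟨c, h⟩ = (1 - p) * (1 / 2 ^ (c / 2 + 1)) / (2 * p - 1) := by
          rw [eq_div_iff h2p']
          linear_combination -h1
        rw [h2]
        have hpw : (2 : ℝ) ^ (c / 2 + 1) ≠ 0 := by positivity
        field_simp
        try ring
        try exact Or.inl trivial
    funext i
    obtain ⟨c, h⟩ := i
    rw [freezeV_mk]
    rcases Nat.even_or_odd c with ⟨m, hm⟩ | ⟨m, hm⟩
    · exact hEvenAll c h (by omega)
    · exact hOddAll c h (by omega)
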